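/- SAT rigidity of equivariant maps: let Γ act measure-class-preservingly on a standard probability space (B,ν) such that the action is strongly almost transitive (SAT): for every A ⊆ B with ν(A) > 0 there are γₙ ∈ Γ with ν(γₙ⁻¹A) → 1. Let C be a standard Borel Γ-space and π₁, π₂ : B → C measurable maps with πᵢ(γx) = γπᵢ(x) for ν-a.e. x and all γ ∈ Γ. Then either π₁ = π₂ ν-a.e., or the pushforward measures (π₁)_*ν and (π₂)_*ν are mutually singular. -/

import Mathlib

open MeasureTheory Filter
open ENNReal

lemma sat_aux {Γ B C : Type*} [Group Γ]
    [MeasurableSpace B] [MeasurableSpace C]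
    [MulAction Γ B] [MulAction Γ C]
    (hmC : ∀ γ : Γ, Measurable (fun c : C => γ • c))
    (ν : Measure B) [IsProbabilityMeasure ν]
    (hSAT : ∀ A : Set B, MeasurableSet A → 0 < ν A →
      ∃ γ : ℕ → Γ, Tendsto (fun n => ν ((fun b => γ n • b) ⁻¹' A)) atTop (nhds 1))
    (π₁ π₂ : B → C) (h₁ : Measurable π₁) (h₂ : Measurable π₂)
    (heq₁ : ∀ γ : Γ, ∀ᵐ b ∂ν, π₁ (γ • b) = γ • π₁ b)
    (heq₂ : ∀ γ : Γ, ∀ᵐ b ∂ν, π₂ (γ • b) = γ • π₂ b)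
    (U : Set C) (hU : MeasurableSet U)
    (hpos : ν (π₁ ⁻¹' U ∩ π₂ ⁻¹' Uᶜ) ≠ 0) :
    Measure.MutuallySingular (ν.map π₁) (ν.map π₂) := by
  set A : Set B := π₁ ⁻¹' U ∩ π₂ ⁻¹' Uᶜ with hAdef
  have hAm : MeasurableSet A := (h₁ hU).inter (h₂ hU.compl)
  obtain ⟨γ, hγ⟩ := hSAT A hAm (pos_iff_ne_zero.mpr hpos)
  have hεle : ∀ k : ℕ, ((2 : ℝ≥0∞)⁻¹) ^ k ≤ 1 :=
    fun k => pow_le_one₀ zero_le (by norm_num)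
  have hεne : ∀ k : ℕ, ((2 : ℝ≥0∞)⁻¹) ^ k ≠ 0 :=
    fun k => pow_ne_zero k (by norm_num)
  have hlt : ∀ k : ℕ, (1 : ℝ≥0∞) - 2⁻¹ ^ k < 1 :=
    fun k => ENNReal.sub_lt_self one_ne_top one_ne_zero (hεne k)
  have hch : ∀ k : ℕ, ∃ m, 1 - 2⁻¹ ^ k < ν ((fun b => γ m • b) ⁻¹' A) :=
    fun k => (hγ.eventually (eventually_gt_nhds (hlt k))).exists
  choose m hm using hch
  set V : ℕ → Set C := fun k => (fun c => γ (m k) • c) ⁻¹' U with hVdef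
  have hVm : ∀ k, MeasurableSet (V k) := fun k => hmC _ hU
  -- transfer via equivariance
  have key₁ : ∀ k, ν ((fun b => γ (m k) • b) ⁻¹' A) ≤ ν (π₁ ⁻¹' V k) := by
    intro k
    refine measure_mono_ae ?_
    filter_upwards [heq₁ (γ (m k))] with b hb hbA
    show π₁ b ∈ V k
    simp only [hVdef, Set.mem_preimage]
    rw [← hb]
    exact hbA.1
  have key₂ : ∀ k, ν ((fun b => γ (m k) • b) ⁻¹' A) ≤ ν (π₂ ⁻¹' (V k)ᶜ) := by
    intro k
    refine measure_mono_ae ?_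
    filter_upwards [heq₂ (γ (m k))] with b hb hbA
    show π₂ b ∈ (V k)ᶜ
    simp only [hVdef, Set.mem_preimage, Set.mem_compl_iff]
    rw [← hb]
    exact hbA.2
  have bound : ∀ k x, ν ((fun b => γ (m k) • b) ⁻¹' A) ≤ x → 1 - x ≤ 2⁻¹ ^ k := by
    intro k x hx
    calc 1 - x ≤ 1 - ν ((fun b => γ (m k) • b) ⁻¹' A) := tsub_le_tsub_left hx 1
      _ ≤ 1 - (1 - 2⁻¹ ^ k) := tsub_le_tsub_left (hm k).le 1
      _ = 2⁻¹ ^ k := ENNReal.sub_sub_cancel one_ne_top (hεle k)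
  have b1 : ∀ k, (ν.map π₁) ((V k)ᶜ) ≤ 2⁻¹ ^ k := by
    intro k
    rw [Measure.map_apply h₁ (hVm k).compl, Set.preimage_compl,
      prob_compl_eq_one_sub (h₁ (hVm k))]
    exact bound k _ (key₁ k)
  have b2 : ∀ k, (ν.map π₂) (V k) ≤ 2⁻¹ ^ k := by
    intro k
    have hc : ν (π₂ ⁻¹' V k) = 1 - ν ((π₂ ⁻¹' V k)ᶜ) := by
      have := prob_compl_eq_one_sub (μ := ν) (h₂ (hVm k)).compl
      rwa [compl_compl] at this
    rw [Measure.map_apply h₂ (hVm k), hc]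
    refine bound k _ ?_
    rw [← Set.preimage_compl]
    exact key₂ k
  -- the singular set
  set s : Set C := ⋂ j, ⋃ k, ⋃ (_ : j ≤ k), (V k)ᶜ with hsdef
  have hsm : MeasurableSet s :=
    MeasurableSet.iInter fun j => MeasurableSet.iUnion fun k =>
      MeasurableSet.iUnion fun _ => (hVm k).compl
  have htend0 : Tendsto (fun k : ℕ => ((2 : ℝ≥0∞)⁻¹) ^ k) atTop (nhds 0) :=
    ENNReal.tendsto_pow_atTop_nhds_zero_of_lt_one (by norm_num)
  refine ⟨s, hsm, ?_, ?_⟩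
  · -- (ν.map π₁) s = 0
    have tail : ∀ j : ℕ, (ν.map π₁) s ≤ 2⁻¹ ^ j * 2 := by
      intro j
      calc (ν.map π₁) s ≤ (ν.map π₁) (⋃ i : ℕ, (V (j + i))ᶜ) := by
            refine measure_mono ?_
            refine (Set.iInter_subset _ j).trans ?_
            rintro x hx
            simp only [Set.mem_iUnion] at hx ⊢
            obtain ⟨k, hk, hxk⟩ := hx
            exact ⟨k - j, by rwa [Nat.add_sub_cancel' hk]⟩
        _ ≤ ∑' i : ℕ, (ν.map π₁) ((V (j + i))ᶜ) := measure_iUnion_le _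
        _ ≤ ∑' i : ℕ, 2⁻¹ ^ (j + i) := ENNReal.tsum_le_tsum fun i => b1 (j + i)
        _ = 2⁻¹ ^ j * ∑' i : ℕ, 2⁻¹ ^ i := by
            simp [pow_add, ENNReal.tsum_mul_left]
        _ = 2⁻¹ ^ j * 2 := by
            rw [ENNReal.tsum_geometric, ENNReal.one_sub_inv_two, inv_inv]
    have htend : Tendsto (fun j : ℕ => ((2 : ℝ≥0∞)⁻¹) ^ j * 2) atTop (nhds 0) := by
      have := ENNReal.Tendsto.mul_const htend0 (b := 2) (Or.inr (by norm_num))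
      simpa using this
    exact le_antisymm (ge_of_tendsto' htend tail) zero_le
  · -- (ν.map π₂) sᶜ = 0
    have hcompl : sᶜ = ⋃ j, ⋂ k, ⋂ (_ : j ≤ k), V k := by
      simp [hsdef, Set.compl_iInter, Set.compl_iUnion]
    rw [hcompl]
    refine measure_iUnion_null fun j => ?_
    have hb : ∀ k, j ≤ k → (ν.map π₂) (⋂ k, ⋂ (_ : j ≤ k), V k) ≤ 2⁻¹ ^ k := by
      intro k hk
      exact (measure_mono (Set.iInter₂_subset k hk)).trans (b2 k)
    have : (ν.map π₂) (⋂ k, ⋂ (_ : j ≤ k), V k) ≤ 0 :=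
      ge_of_tendsto htend0 (eventually_atTop.2 ⟨j, fun k hk => hb k hk⟩)
    exact le_antisymm this zero_le

/-- SAT rigidity of equivariant maps: if the measure class preserving
action of the countable group `Γ` on the standard probability space `(B, ν)` is strongly
almost transitive (for every positive measure set `A` there are `γₙ` with
`ν(γₙ⁻¹ A) → 1`), and `π₁, π₂ : B → C` are measurable `ν`-a.e. `Γ`-equivariant maps to a
standard Borel `Γ`-space `C`, then either `π₁ = π₂` ν-a.e. or `(π₁)_*ν ⊥ (π₂)_*ν`. -/
theorem sat_rigidity_of_equivariant_maps
    {Γ B C : Type*} [Group Γ] [Countable Γ]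
    [MeasurableSpace B] [StandardBorelSpace B]
    [MeasurableSpace C] [StandardBorelSpace C]
    [MulAction Γ B] [MulAction Γ C]
    (hmB : ∀ γ : Γ, Measurable (fun b : B => γ • b))
    (hmC : ∀ γ : Γ, Measurable (fun c : C => γ • c))
    (ν : Measure B) [IsProbabilityMeasure ν]
    (hqi : ∀ γ : Γ, ν.map (fun b => γ • b) ≪ ν ∧ ν ≪ ν.map (fun b => γ • b))
    (hSAT : ∀ A : Set B, MeasurableSet A → 0 < ν A →
      ∃ γ : ℕ → Γ, Tendsto (fun n => ν ((fun b => γ n • b) ⁻¹' A)) atTop (nhds 1))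
    (π₁ π₂ : B → C) (h₁ : Measurable π₁) (h₂ : Measurable π₂)
    (heq₁ : ∀ γ : Γ, ∀ᵐ b ∂ν, π₁ (γ • b) = γ • π₁ b)
    (heq₂ : ∀ γ : Γ, ∀ᵐ b ∂ν, π₂ (γ • b) = γ • π₂ b) :
    (∀ᵐ b ∂ν, π₁ b = π₂ b) ∨
      Measure.MutuallySingular (ν.map π₁) (ν.map π₂) := by
  by_cases hae : ∀ᵐ b ∂ν, π₁ b = π₂ b
  · exact Or.inl hae
  right
  obtain ⟨f, hf⟩ := exists_measurableEmbedding_real C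
  set g₁ : B → ℝ := fun b => f (π₁ b) with hg₁
  set g₂ : B → ℝ := fun b => f (π₂ b) with hg₂
  have hN : ν {b | g₁ b ≠ g₂ b} ≠ 0 := by
    intro h0
    apply hae
    rw [ae_iff]
    convert h0 using 2
    ext b
    simp [hg₁, hg₂, hf.injective.eq_iff]
  have hsub : {b | g₁ b ≠ g₂ b} ⊆
      ⋃ q : ℚ, ({b | g₁ b < q ∧ (q : ℝ) < g₂ b} ∪ {b | g₂ b < q ∧ (q : ℝ) < g₁ b}) := by
    intro b hb
    rcases lt_or_gt_of_ne hb with h | h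
    · obtain ⟨q, hq1, hq2⟩ := exists_rat_btwn h
      exact Set.mem_iUnion.2 ⟨q, Or.inl ⟨hq1, hq2⟩⟩
    · obtain ⟨q, hq1, hq2⟩ := exists_rat_btwn h
      exact Set.mem_iUnion.2 ⟨q, Or.inr ⟨hq1, hq2⟩⟩
  have hq : ∃ q : ℚ,
      ν ({b | g₁ b < q ∧ (q : ℝ) < g₂ b} ∪ {b | g₂ b < q ∧ (q : ℝ) < g₁ b}) ≠ 0 := by
    by_contra hall
    push_neg at hall
    exact hN (measure_mono_null hsub (measure_iUnion_null hall))
  obtain ⟨q, hq⟩ := hq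
  have hq' : ν {b | g₁ b < q ∧ (q : ℝ) < g₂ b} ≠ 0 ∨
      ν {b | g₂ b < q ∧ (q : ℝ) < g₁ b} ≠ 0 := by
    by_contra h
    push_neg at h
    exact hq (measure_union_null h.1 h.2)
  set U : Set C := f ⁻¹' Set.Iio (q : ℝ) with hUdef
  have hU : MeasurableSet U := hf.measurable measurableSet_Iio
  rcases hq' with h | h
  · refine sat_aux hmC ν hSAT π₁ π₂ h₁ h₂ heq₁ heq₂ U hU ?_
    intro h0
    apply h
    refine measure_mono_null ?_ h0
    intro b hb
    exact ⟨hb.1, fun hc => absurd hb.2 (not_lt.2 (le_of_lt hc))⟩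
  · refine (sat_aux hmC ν hSAT π₂ π₁ h₂ h₁ heq₂ heq₁ U hU ?_).symm
    intro h0
    apply h
    refine measure_mono_null ?_ h0
    intro b hb
    exact ⟨hb.1, fun hc => absurd hb.2 (not_lt.2 (le_of_lt hc))⟩
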